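/- There exists a constant C (depending only on f) such that for all real x ≥ 2 and all 2 ≤ z ≤ y, ∑_{z ≤ p < y, p prime} #{n ∈ ℤ : x < n ≤ 2x and p² | f(n)} ≤ C·(x/z + y). -/

import Mathlib

open Polynomial

private theorem sq_combo (f : Polynomial ℤ) (hirr : Irreducible f) (hdeg : 1 ≤ f.natDegree) :
    ∃ (a b : Polynomial ℤ) (m : ℤ), m ≠ 0 ∧ a * f + b * f.derivative = C m := by
  have hprim : f.IsPrimitive := by
    intro r hdvd
    obtain ⟨g, hg⟩ := hdvd
    rcases hirr.isUnit_or_isUnit hg with h | h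
    · exact isUnit_C.mp h
    · exfalso
      have h1 : f.natDegree ≤ 0 := by
        calc f.natDegree = (C r * g).natDegree := by rw [hg]
        _ ≤ (C r).natDegree + g.natDegree := natDegree_mul_le
        _ ≤ 0 := by simp [natDegree_eq_zero_of_isUnit h]
      omega
  set fQ := f.map (Int.castRingHom ℚ) with hfQ
  have hfQirr : Irreducible fQ :=
    (Polynomial.IsPrimitive.Int.irreducible_iff_irreducible_map_cast hprim).mp hirr
  have hfQ0 : fQ ≠ 0 := hfQirr.ne_zero
  have hdQ : fQ.natDegree = f.natDegree := by
    exact natDegree_map_eq_of_injective Int.cast_injective f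
  have hndvd : ¬ fQ ∣ fQ.derivative := by
    intro hdvd
    have hd0 : fQ.derivative ≠ 0 := by
      intro h
      have := natDegree_eq_zero_of_derivative_eq_zero h
      omega
    have := Polynomial.degree_le_of_dvd hdvd hd0
    have h2 := Polynomial.degree_derivative_lt hfQ0
    exact absurd (this.trans_lt h2) (lt_irrefl _)
  have hcop : IsCoprime fQ fQ.derivative := (hfQirr.isCoprime_or_dvd _).resolve_right hndvd
  obtain ⟨u, v, huv⟩ := hcop
  obtain ⟨c1, hc1⟩ := IsLocalization.integerNormalization_map_to_map (nonZeroDivisors ℤ) u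
  obtain ⟨c2, hc2⟩ := IsLocalization.integerNormalization_map_to_map (nonZeroDivisors ℤ) v
  set A := IsLocalization.integerNormalization (nonZeroDivisors ℤ) u
  set B := IsLocalization.integerNormalization (nonZeroDivisors ℤ) v
  refine ⟨C (c2 : ℤ) * A, C (c1 : ℤ) * B, (c1 : ℤ) * (c2 : ℤ), ?_, ?_⟩
  · exact mul_ne_zero (nonZeroDivisors.coe_ne_zero c1) (nonZeroDivisors.coe_ne_zero c2)
  · have hinj : Function.Injective (Polynomial.map (Int.castRingHom ℚ)) := by
      apply Polynomial.map_injective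
      exact Int.cast_injective
    apply hinj
    have halg : algebraMap ℤ ℚ = Int.castRingHom ℚ := rfl
    rw [halg] at hc1 hc2
    push_cast [Polynomial.map_add, Polynomial.map_mul, Polynomial.map_C, hc1, hc2,
      Polynomial.derivative_map]
    have e1 : ((c1:ℤ) • u) = C ((c1:ℤ):ℚ) * u := by
      rw [zsmul_eq_mul, ← C_eq_intCast]
    have e2 : ((c2:ℤ) • v) = C ((c2:ℤ):ℚ) * v := by
      rw [zsmul_eq_mul, ← C_eq_intCast]
    rw [e1, e2, ← hfQ, ← derivative_map]
    simp only [Int.coe_castRingHom, map_mul]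
    have : (C ((c2:ℤ):ℚ) * (C ((c1:ℤ):ℚ) * u)) * fQ + (C ((c1:ℤ):ℚ) * (C ((c2:ℤ):ℚ) * v)) * fQ.derivative
        = C ((c1:ℤ):ℚ) * C ((c2:ℤ):ℚ) * (u * fQ + v * fQ.derivative) := by ring
    rw [this, huv, mul_one]

private theorem sq_ap_count (a b c M : ℤ) (hM : 0 < M) :
    ((Finset.Ioc a b).filter (fun n => M ∣ n - c)).card ≤ ((b - a - 1)/M).toNat + 1 := by
  have h1 : ((Finset.Ioc a b).filter (fun n => M ∣ n - c)).card
      ≤ (Finset.range (((b - a - 1)/M).toNat + 1)).card := by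
    apply Finset.card_le_card_of_injOn (fun n => ((n - (a+1))/M).toNat)
    · intro n hn
      simp only [Finset.coe_filter, Set.mem_setOf_eq, Finset.mem_Ioc] at hn
      rw [Finset.mem_coe, Finset.mem_range, Nat.lt_succ_iff]
      beta_reduce
      have hle : n - (a+1) ≤ b - a - 1 := by omega
      have h2 := Int.ediv_le_ediv hM hle
      omega
    · intro n1 h1 n2 h2 heq
      change ((n1 - (a+1))/M).toNat = ((n2 - (a+1))/M).toNat at heq
      simp only [Finset.coe_filter, Set.mem_setOf_eq, Finset.mem_Ioc] at h1 h2
      have hd : M ∣ n2 - n1 := by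
        have := dvd_sub h2.2 h1.2
        simpa using this
      obtain ⟨k, hk⟩ := hd
      have hq1 : 0 ≤ (n1 - (a+1))/M := Int.ediv_nonneg (by omega) hM.le
      have hq2 : 0 ≤ (n2 - (a+1))/M := Int.ediv_nonneg (by omega) hM.le
      have heq' : (n1 - (a+1))/M = (n2 - (a+1))/M := by omega
      have hrw : (n2 - (a+1)) = (n1 - (a+1)) + M * k := by omega
      rw [hrw, Int.add_mul_ediv_left _ k hM.ne'] at heq'
      have hk0 : k = 0 := by linarith
      rw [hk0, mul_zero] at hk
      omega
  simpa using h1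

private theorem sq_good_sub (f a b : Polynomial ℤ) (m : ℤ)
    (hid : a * f + b * f.derivative = C m)
    (p : ℕ) (hp : p.Prime) (hpm : ¬ ((p:ℤ) ∣ m)) (n1 n2 : ℤ)
    (h1 : (p:ℤ)^2 ∣ f.eval n1) (h2 : (p:ℤ)^2 ∣ f.eval n2) (hcong : (p:ℤ) ∣ n2 - n1) :
    (p:ℤ)^2 ∣ n2 - n1 := by
  obtain ⟨t, ht⟩ := hcong
  obtain ⟨k, hk⟩ := f.binomExpansion n1 ((p:ℤ) * t)
  have hn2 : n1 + (p:ℤ) * t = n2 := by omega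
  rw [hn2] at hk
  have hpprime : Prime ((p:ℤ)) := Nat.prime_iff_prime_int.mp hp
  have hdvd : (p:ℤ)^2 ∣ f.derivative.eval n1 * ((p:ℤ) * t) := by
    have e : f.derivative.eval n1 * ((p:ℤ) * t)
        = f.eval n2 - f.eval n1 - k * ((p:ℤ) * t)^2 := by linarith
    rw [e]
    refine dvd_sub (dvd_sub h2 h1) ?_
    have : (p:ℤ)^2 ∣ ((p:ℤ) * t)^2 := by
      rw [mul_pow]; exact Dvd.dvd.mul_right dvd_rfl _
    exact Dvd.dvd.mul_left this k
  have hstep : (p:ℤ) ∣ f.derivative.eval n1 * t := by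
    have h' : (p:ℤ) * (p:ℤ) ∣ (p:ℤ) * (f.derivative.eval n1 * t) := by
      have e1 : (p:ℤ) * (f.derivative.eval n1 * t) = f.derivative.eval n1 * ((p:ℤ) * t) := by ring
      rw [e1, ← sq]
      exact hdvd
    exact (mul_dvd_mul_iff_left hpprime.ne_zero).mp h'
  rcases (hpprime.dvd_mul.mp hstep) with hdf | hdt
  · exfalso
    have hfn : (p:ℤ) ∣ f.eval n1 := dvd_trans (dvd_pow_self _ two_ne_zero) h1
    have hm : (p:ℤ) ∣ m := by
      have heval := congrArg (eval n1) hid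
      simp only [eval_add, eval_mul, eval_C] at heval
      rw [← heval]
      exact dvd_add (Dvd.dvd.mul_left hfn _) (Dvd.dvd.mul_left hdf _)
    exact hpm hm
  · obtain ⟨s, hs⟩ := hdt
    exact ⟨s, by rw [ht, hs]; ring⟩

private theorem sq_good_count (f a b : Polynomial ℤ) (m : ℤ)
    (hid : a * f + b * f.derivative = C m)
    (p : ℕ) (hp : p.Prime) (hpm : ¬ ((p:ℤ) ∣ m)) (A B : ℤ) :
    (((Finset.Ioc A B).filter (fun n => (p:ℤ)^2 ∣ f.eval n)).card
      ≤ (((B - A - 1)/((p:ℤ)^2)).toNat + 1) * f.natDegree) := by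
  haveI : Fact p.Prime := ⟨hp⟩
  set S := (Finset.Ioc A B).filter (fun n => (p:ℤ)^2 ∣ f.eval n) with hS
  set φ : ℤ → ZMod p := fun n => (n : ZMod p) with hφ
  have hcard : S.card ≤ (((B - A - 1)/((p:ℤ)^2)).toNat + 1) * (S.image φ).card := by
    apply Finset.card_le_mul_card_image
    intro r hr
    obtain ⟨n0, hn0S, hn0r⟩ := Finset.mem_image.mp hr
    have hsub : S.filter (fun n => φ n = r) ⊆
        (Finset.Ioc A B).filter (fun n => (p:ℤ)^2 ∣ n - n0) := by
      intro n hn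
      simp only [Finset.mem_filter, hS, Finset.mem_Ioc] at hn ⊢
      refine ⟨hn.1.1, ?_⟩
      have hcast : (n : ZMod p) = (n0 : ZMod p) := by
        have : φ n = φ n0 := by rw [hn.2, ← hn0r]
        simpa [hφ] using this
      have hcong : (p:ℤ) ∣ n - n0 := by
        have hmeq := (ZMod.intCast_eq_intCast_iff n n0 p).mp hcast
        exact dvd_sub_comm.mp hmeq.dvd
      simp only [Finset.mem_filter, hS, Finset.mem_Ioc] at hn0S
      exact sq_good_sub f a b m hid p hp hpm n0 n hn0S.2 hn.1.2 hcong
    refine le_trans (Finset.card_le_card hsub) ?_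
    exact sq_ap_count A B n0 _ (by exact_mod_cast pow_pos (by exact_mod_cast hp.pos : (0:ℤ) < (p:ℤ)) 2)
  have himg : (S.image φ).card ≤ f.natDegree := by
    set fp := f.map (Int.castRingHom (ZMod p)) with hfp
    have hfp0 : fp ≠ 0 := by
      intro h0
      have hd0 : f.derivative.map (Int.castRingHom (ZMod p)) = 0 := by
        rw [← derivative_map, ← hfp, h0, derivative_zero]
      have hmap := congrArg (Polynomial.map (Int.castRingHom (ZMod p))) hid
      simp only [Polynomial.map_add, Polynomial.map_mul, Polynomial.map_C, ← hfp, h0, hd0,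
        mul_zero, add_zero, zero_add] at hmap
      have hz : ((m : ℤ) : ZMod p) = 0 := by
        have := congrArg (fun q => Polynomial.coeff q 0) hmap
        simpa using this.symm
      rw [ZMod.intCast_zmod_eq_zero_iff_dvd] at hz
      exact hpm hz
    have hsub : S.image φ ⊆ fp.roots.toFinset := by
      intro r hr
      obtain ⟨n, hnS, hnr⟩ := Finset.mem_image.mp hr
      simp only [Finset.mem_filter, hS, Finset.mem_Ioc] at hnS
      rw [Multiset.mem_toFinset, mem_roots hfp0]
      rw [← hnr]
      show fp.eval ((n : ℤ) : ZMod p) = 0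
      rw [hfp, eval_intCast_map]
      have hdvd : (p:ℤ) ∣ f.eval n := dvd_trans (dvd_pow_self _ two_ne_zero) hnS.2
      show ((f.eval n : ℤ) : ZMod p) = 0
      rw [ZMod.intCast_zmod_eq_zero_iff_dvd]
      exact hdvd
    calc (S.image φ).card ≤ fp.roots.toFinset.card := Finset.card_le_card hsub
      _ ≤ Multiset.card fp.roots := Multiset.toFinset_card_le _
      _ ≤ fp.natDegree := fp.card_roots'
      _ ≤ f.natDegree := natDegree_map_le
  calc S.card ≤ (((B - A - 1)/((p:ℤ)^2)).toNat + 1) * (S.image φ).card := hcard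
    _ ≤ _ := by exact Nat.mul_le_mul_left _ himg

theorem square_divisors_sum_bound (f : Polynomial ℤ) (hirr : Irreducible f)
    (hdeg : 1 ≤ f.natDegree) :
    ∃ C : ℝ, ∀ x z y : ℝ, 2 ≤ x → 2 ≤ z → z ≤ y →
      ∑ p ∈ (Finset.Ico ⌈z⌉₊ ⌈y⌉₊).filter Nat.Prime,
          ((((Finset.Ioc ⌊x⌋ ⌊2 * x⌋).filter
            (fun n : ℤ => ((p : ℤ)) ^ 2 ∣ f.eval n)).card : ℝ)) ≤
        C * (x / z + y) := by
  obtain ⟨a, b, m, hm0, hid⟩ := sq_combo f hirr hdeg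
  set d : ℕ := f.natDegree with hd
  refine ⟨2 * (m.natAbs : ℝ)^2 + 2 * d, ?_⟩
  intro x z y hx hz hzy
  set N := ⌈z⌉₊ with hN
  set M := ⌈y⌉₊ with hM
  set P := (Finset.Ico N M).filter Nat.Prime with hP
  set A := ⌊x⌋ with hA
  set B := ⌊2 * x⌋ with hB
  have hxz : 0 ≤ x / z := by positivity
  have hzN : z ≤ N := Nat.le_ceil z
  have hN2 : 2 ≤ N := by
    have h1 : (1:ℕ) < ⌈z⌉₊ := Nat.lt_ceil.mpr (by push_cast; linarith)
    omega
  have hNM : N ≤ M := Nat.ceil_le_ceil hzy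
  have hcount : ∀ p ∈ P, (((Finset.Ioc A B).filter
      (fun n : ℤ => ((p : ℤ)) ^ 2 ∣ f.eval n)).card : ℝ) ≤ 2 * x := by
    intro p hp
    calc (((Finset.Ioc A B).filter (fun n : ℤ => ((p : ℤ)) ^ 2 ∣ f.eval n)).card : ℝ)
        ≤ ((Finset.Ioc A B).card : ℝ) := by
          exact_mod_cast Finset.card_le_card (Finset.filter_subset _ _)
      _ = ((B - A).toNat : ℝ) := by rw [Int.card_Ioc]
      _ ≤ x + 1 := by
          have h1 : ((B : ℝ)) ≤ 2 * x := Int.floor_le _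
          have h2 : x - 1 ≤ ((A : ℝ)) := by
            have := Int.sub_one_lt_floor x
            linarith
          have h3 : (((B - A).toNat : ℤ) : ℝ) = max ((B - A : ℤ) : ℝ) 0 := by
            rw [Int.toNat_eq_max]; push_cast; rfl
          have h4 : ((B - A : ℤ) : ℝ) ≤ x + 1 := by push_cast; linarith
          have : (((B - A).toNat : ℤ) : ℝ) ≤ x + 1 := by
            rw [h3]; apply max_le h4; linarith
          exact_mod_cast this
      _ ≤ 2 * x := by linarith
  -- split into bad and good primes
  rw [← Finset.sum_filter_add_sum_filter_not P (fun p => p ∣ m.natAbs)]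
  have hbad : ∑ p ∈ P.filter (fun p => p ∣ m.natAbs),
      (((Finset.Ioc A B).filter (fun n : ℤ => ((p : ℤ)) ^ 2 ∣ f.eval n)).card : ℝ)
      ≤ 2 * (m.natAbs : ℝ)^2 * (x / z) := by
    have hterm : ∀ p ∈ P.filter (fun p => p ∣ m.natAbs),
        (((Finset.Ioc A B).filter (fun n : ℤ => ((p : ℤ)) ^ 2 ∣ f.eval n)).card : ℝ)
        ≤ 2 * (m.natAbs : ℝ) * (x / z) := by
      intro p hp
      rw [Finset.mem_filter] at hp
      have hpm : p ≤ m.natAbs := Nat.le_of_dvd (Int.natAbs_pos.mpr hm0) hp.2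
      have hzp : z ≤ m.natAbs := by
        rw [hP, Finset.mem_filter, Finset.mem_Ico] at hp
        have : N ≤ p := hp.1.1.1
        have : z ≤ (p : ℝ) := le_trans hzN (by exact_mod_cast this)
        calc z ≤ (p:ℝ) := this
          _ ≤ (m.natAbs : ℝ) := by exact_mod_cast hpm
      have h2x : 2 * x ≤ 2 * (m.natAbs : ℝ) * (x / z) := by
        have hz0 : 0 < z := by linarith
        have hmul : z * (x/z) ≤ (m.natAbs:ℝ) * (x/z) := mul_le_mul_of_nonneg_right hzp hxz
        have e : z * (x/z) = x := by field_simp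
        linarith
      exact le_trans (hcount p hp.1) h2x
    calc ∑ p ∈ P.filter (fun p => p ∣ m.natAbs),
        (((Finset.Ioc A B).filter (fun n : ℤ => ((p : ℤ)) ^ 2 ∣ f.eval n)).card : ℝ)
        ≤ ∑ _p ∈ P.filter (fun p => p ∣ m.natAbs), 2 * (m.natAbs : ℝ) * (x / z) :=
          Finset.sum_le_sum hterm
      _ = (P.filter (fun p => p ∣ m.natAbs)).card * (2 * (m.natAbs : ℝ) * (x / z)) := by
          rw [Finset.sum_const, nsmul_eq_mul]
      _ ≤ (m.natAbs : ℝ) * (2 * (m.natAbs : ℝ) * (x / z)) := by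
          have hsub : P.filter (fun p => p ∣ m.natAbs) ⊆ Finset.Icc 1 m.natAbs := by
            intro p hp
            rw [Finset.mem_filter] at hp
            have hpp : p.Prime := (Finset.mem_filter.mp hp.1).2
            rw [Finset.mem_Icc]
            exact ⟨hpp.one_lt.le, Nat.le_of_dvd (Int.natAbs_pos.mpr hm0) hp.2⟩
          have := Finset.card_le_card hsub
          rw [Nat.card_Icc] at this
          have hcard : ((P.filter (fun p => p ∣ m.natAbs)).card : ℝ) ≤ (m.natAbs : ℝ) := by
            exact_mod_cast le_trans this (by omega)
          apply mul_le_mul_of_nonneg_right hcard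
          positivity
      _ = 2 * (m.natAbs : ℝ)^2 * (x / z) := by ring
  have hgood : ∑ p ∈ P.filter (fun p => ¬ p ∣ m.natAbs),
      (((Finset.Ioc A B).filter (fun n : ℤ => ((p : ℤ)) ^ 2 ∣ f.eval n)).card : ℝ)
      ≤ 2 * (d:ℝ) * (x / z) + 2 * d * y := by
    have hd0 : (0:ℝ) ≤ (d:ℝ) := Nat.cast_nonneg _
    have hx0 : (0:ℝ) < x := by linarith
    have hterm : ∀ p ∈ P.filter (fun p => ¬ p ∣ m.natAbs),
        (((Finset.Ioc A B).filter (fun n : ℤ => ((p : ℤ)) ^ 2 ∣ f.eval n)).card : ℝ)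
        ≤ (d:ℝ) * x * ((p:ℝ)^2)⁻¹ + d := by
      intro p hp
      rw [Finset.mem_filter] at hp
      have hpp : p.Prime := (Finset.mem_filter.mp hp.1).2
      have hppos : (0:ℝ) < (p:ℝ)^2 := by
        have : (0:ℕ) < p := hpp.pos
        positivity
      have hpm' : ¬ ((p:ℤ) ∣ m) := by
        intro h
        exact hp.2 (Int.natCast_dvd.mp h)
      have hgc := sq_good_count f a b m hid p hpp hpm' A B
      set q : ℤ := (B - A - 1) / ((p:ℤ)^2) with hq
      have hp2ne : ((p:ℤ)^2) ≠ 0 := by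
        have : (0:ℤ) < (p:ℤ)^2 := by exact_mod_cast pow_pos (by exact_mod_cast hpp.pos : (0:ℤ) < (p:ℤ)) 2
        exact this.ne'
      have hqmul : q * ((p:ℤ)^2) ≤ B - A - 1 := Int.ediv_mul_le _ hp2ne
      have hBA : ((B:ℝ)) - A - 1 ≤ x := by
        have h1 : ((B : ℝ)) ≤ 2 * x := Int.floor_le _
        have h2 : x - 1 < ((A : ℝ)) := Int.sub_one_lt_floor x
        linarith
      have hqr : ((q:ℝ)) ≤ x / (p:ℝ)^2 := by
        rw [le_div_iff₀ hppos]
        have : ((q:ℝ)) * ((p:ℝ)^2) ≤ ((B:ℝ)) - A - 1 := by exact_mod_cast hqmul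
        linarith
      have htn : ((q.toNat : ℝ)) ≤ x / (p:ℝ)^2 := by
        have h3 : ((q.toNat : ℤ) : ℝ) = max ((q:ℝ)) 0 := by
          rw [Int.toNat_eq_max]; push_cast; rfl
        have h4 : max ((q:ℝ)) 0 ≤ x / (p:ℝ)^2 := max_le hqr (by positivity)
        exact_mod_cast h3 ▸ h4
      have hcast : (((Finset.Ioc A B).filter (fun n : ℤ => ((p : ℤ)) ^ 2 ∣ f.eval n)).card : ℝ)
          ≤ ((q.toNat : ℝ) + 1) * d := by
        have := hgc
        exact_mod_cast this
      calc (((Finset.Ioc A B).filter (fun n : ℤ => ((p : ℤ)) ^ 2 ∣ f.eval n)).card : ℝ)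
          ≤ ((q.toNat : ℝ) + 1) * d := hcast
        _ ≤ (x / (p:ℝ)^2 + 1) * d := by nlinarith
        _ = (d:ℝ) * x * ((p:ℝ)^2)⁻¹ + d := by field_simp
    have hsum1 : ∑ p ∈ P.filter (fun p => ¬ p ∣ m.natAbs),
        (((Finset.Ioc A B).filter (fun n : ℤ => ((p : ℤ)) ^ 2 ∣ f.eval n)).card : ℝ)
        ≤ ∑ p ∈ P, ((d:ℝ) * x * ((p:ℝ)^2)⁻¹ + d) := by
      refine le_trans (Finset.sum_le_sum hterm) ?_
      refine Finset.sum_le_sum_of_subset_of_nonneg (Finset.filter_subset _ _) ?_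
      intro p hp _
      have hp1 : 1 ≤ p := ((Finset.mem_filter.mp hp).2).pos
      have : (0:ℝ) < (p:ℝ)^2 := by positivity
      have : (0:ℝ) ≤ ((p:ℝ)^2)⁻¹ := by positivity
      positivity
    have hsumsq : ∑ p ∈ P, ((p:ℝ)^2)⁻¹ ≤ 2 / z := by
      have hsub : P ⊆ Finset.Ioc (N-1) M := by
        intro p hp
        rw [hP, Finset.mem_filter, Finset.mem_Ico] at hp
        rw [Finset.mem_Ioc]
        omega
      have h1 : ∑ p ∈ P, ((p:ℝ)^2)⁻¹ ≤ ∑ n ∈ Finset.Ioc (N-1) M, ((n:ℝ)^2)⁻¹ := by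
        refine Finset.sum_le_sum_of_subset_of_nonneg hsub ?_
        intro n hn _
        rw [Finset.mem_Ioc] at hn
        have : 1 ≤ n := by omega
        positivity
      have h2 : ∑ n ∈ Finset.Ioc (N-1) M, (((n:ℝ))^2)⁻¹ ≤ ((N-1:ℕ):ℝ)⁻¹ - ((M:ℕ):ℝ)⁻¹ :=
        sum_Ioc_inv_sq_le_sub (by omega) (by omega)
      have hMnn : (0:ℝ) ≤ ((M:ℕ):ℝ)⁻¹ := by positivity
      have hcastN : ((N-1:ℕ):ℝ) = (N:ℝ) - 1 := by
        have : (1:ℕ) ≤ N := by omega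
        push_cast [Nat.cast_sub this]
        ring
      have hz0 : (0:ℝ) < z := by linarith
      have hNz : z ≤ 2 * ((N:ℝ) - 1) := by
        have hN2' : (2:ℝ) ≤ (N:ℝ) := by exact_mod_cast hN2
        linarith
      have h3 : ((N-1:ℕ):ℝ)⁻¹ ≤ 2 / z := by
        rw [hcastN, inv_eq_one_div, div_le_div_iff₀ (by linarith) hz0]
        linarith
      linarith
    have hcardP : ((P.card : ℝ)) ≤ 2 * y := by
      have h1 : P.card ≤ (Finset.Ico N M).card := Finset.card_le_card (Finset.filter_subset _ _)
      rw [Nat.card_Ico] at h1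
      have h2 : ((P.card : ℝ)) ≤ (M:ℝ) := by
        have : P.card ≤ M := by omega
        exact_mod_cast this
      have h3 : (M:ℝ) < y + 1 := Nat.ceil_lt_add_one (by linarith)
      have hy2 : 2 ≤ y := by linarith
      linarith
    have hsum2 : ∑ p ∈ P, ((d:ℝ) * x * ((p:ℝ)^2)⁻¹ + d)
        = (d:ℝ) * x * (∑ p ∈ P, ((p:ℝ)^2)⁻¹) + (d:ℝ) * P.card := by
      rw [Finset.sum_add_distrib, ← Finset.mul_sum, Finset.sum_const, nsmul_eq_mul]
      ring
    have hz0 : (0:ℝ) < z := by linarith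
    have hfin : (d:ℝ) * x * (2 / z) = 2 * (d:ℝ) * (x / z) := by
      field_simp
    calc ∑ p ∈ P.filter (fun p => ¬ p ∣ m.natAbs),
        (((Finset.Ioc A B).filter (fun n : ℤ => ((p : ℤ)) ^ 2 ∣ f.eval n)).card : ℝ)
        ≤ ∑ p ∈ P, ((d:ℝ) * x * ((p:ℝ)^2)⁻¹ + d) := hsum1
      _ = (d:ℝ) * x * (∑ p ∈ P, ((p:ℝ)^2)⁻¹) + (d:ℝ) * P.card := hsum2
      _ ≤ (d:ℝ) * x * (2 / z) + (d:ℝ) * (2 * y) := by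
          have hdx : (0:ℝ) ≤ (d:ℝ) * x := by positivity
          have := mul_le_mul_of_nonneg_left hsumsq hdx
          have := mul_le_mul_of_nonneg_left hcardP hd0
          linarith
      _ = 2 * (d:ℝ) * (x / z) + 2 * d * y := by rw [hfin]; ring
  have hfinal : 2 * (m.natAbs : ℝ)^2 * (x / z) + (2 * (d:ℝ) * (x / z) + 2 * d * y)
      ≤ (2 * (m.natAbs : ℝ)^2 + 2 * d) * (x / z + y) := by
    have hy0 : (0:ℝ) ≤ y := by linarith
    nlinarith [sq_nonneg ((m.natAbs:ℝ))]
  linarith
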